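/- Let G be a 2-edge-connected multigraph and e any edge of G. Then the tree/forest of 2-edge-connected components of G − e has exactly 2 leaves: #l((G − e)^Br) = #l(G^Br) = 2. -/

import Mathlib

/-- A finite multigraph: loops and parallel edges allowed. -/
structure Multigraph where
  V : Type
  E : Type
  finV : Finite V
  finE : Finite E
  src : E → V
  tgt : E → V

namespace Multigraph

attribute [instance] Multigraph.finV Multigraph.finE

variable (G : Multigraph)

/-- Adjacency using only edges in `S`. -/
def Adj (S : Set G.E) (u v : G.V) : Prop :=
  ∃ e ∈ S, (G.src e = u ∧ G.tgt e = v) ∨ (G.src e = v ∧ G.tgt e = u)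

/-- Reachability using only edges in `S`. -/
def ReachOn (S : Set G.E) : G.V → G.V → Prop :=
  Relation.ReflTransGen (G.Adj S)

/-- Reachability in `G`. -/
def Reach : G.V → G.V → Prop := G.ReachOn Set.univ

def Connected : Prop := Nonempty G.V ∧ ∀ u v : G.V, G.Reach u v

/-- An edge is a bridge iff its removal disconnects its endpoints. -/
def IsBridge (e : G.E) : Prop := ¬ G.ReachOn {f | f ≠ e} (G.src e) (G.tgt e)

def TwoEdgeConnected : Prop := G.Connected ∧ ∀ e : G.E, ¬ G.IsBridge e

/-- The graph `G^Br` obtained by contracting all non-bridge edges: its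
vertices are the 2-edge-connected components of `G`, its edges the bridges. -/
def Br : Multigraph where
  V := Quot (G.ReachOn {e | ¬ G.IsBridge e})
  E := {e : G.E // G.IsBridge e}
  finV := Finite.of_surjective _ Quot.exists_rep
  finE := Subtype.finite
  src e := Quot.mk _ (G.src e.1)
  tgt e := Quot.mk _ (G.tgt e.1)

/-- Number of edges adjacent to a vertex (loops counted once; used only
for forests, which have no loops). -/
noncomputable def degAt (v : G.V) : ℕ := {e : G.E | G.src e = v ∨ G.tgt e = v}.ncard

/-- Leaf count of a forest, with the convention that an isolated vertex
(a single-vertex tree) counts as `2` leaves. -/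
noncomputable def numLeaves : ℕ :=
  2 * {v : G.V | G.degAt v = 0}.ncard + {v : G.V | G.degAt v = 1}.ncard

/-- The induced subgraph on a set of vertices. -/
def induce (W : Set G.V) : Multigraph where
  V := W
  E := {e : G.E // G.src e ∈ W ∧ G.tgt e ∈ W}
  finV := Subtype.finite
  finE := Subtype.finite
  src e := ⟨G.src e.1, e.2.1⟩
  tgt e := ⟨G.tgt e.1, e.2.2⟩

/-- Deletion of an edge. -/
def deleteEdge (e : G.E) : Multigraph where
  V := G.V
  E := {f : G.E // f ≠ e}
  finV := G.finV
  finE := Subtype.finite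
  src f := G.src f.1
  tgt f := G.tgt f.1

/-- Valence of a vertex, loops counted twice. -/
noncomputable def valence (v : G.V) : ℕ :=
  {e : G.E | G.src e = v}.ncard + {e : G.E | G.tgt e = v}.ncard

/-- Number of edges joining `w` to the set `S` (for `w ∉ S`). -/
noncomputable def edgesTo (w : G.V) (S : Set G.V) : ℕ :=
  {e : G.E | (G.src e = w ∧ G.tgt e ∈ S) ∨ (G.tgt e = w ∧ G.src e ∈ S)}.ncard

/-- The Dhar subgraph `Dh(v, d)`: the smallest set of vertices containing `v`
that is closed under adding a vertex `w` whenever `d w` is smaller than the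
number of edges joining `w` to the set. -/
def dhar (d : G.V → ℤ) (v : G.V) : Set G.V :=
  ⋂₀ {S : Set G.V | v ∈ S ∧ ∀ w ∉ S, (G.edgesTo w S : ℤ) ≤ d w}

end Multigraph

/-- A vertex-weighted finite multigraph. -/
structure WGraph extends Multigraph where
  weight : V → ℕ

namespace WGraph

variable (G : WGraph)

/-- The genus `1 - |V| + |E| + Σ_v g_v`. -/
noncomputable def genus : ℤ :=
  1 - (Nat.card G.V : ℤ) + Nat.card G.E + ∑ᶠ v : G.V, (G.weight v : ℤ)

def Semistable : Prop := ∀ v : G.V, G.weight v = 0 → 2 ≤ G.toMultigraph.valence v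

def Stable : Prop := ∀ v : G.V,
  (G.weight v = 0 → 3 ≤ G.toMultigraph.valence v) ∧
  (G.weight v = 1 → 1 ≤ G.toMultigraph.valence v)

/-- Induced weighted subgraph. -/
def induce (W : Set G.V) : WGraph :=
  { G.toMultigraph.induce W with weight := fun v => G.weight v.1 }

/-- The genus of the induced subgraph on `W`:
`|E(W)| - |W| + c(W) + Σ_{v ∈ W} g_v`. -/
noncomputable def genusOf (W : Set G.V) : ℤ :=
  (Nat.card (G.toMultigraph.induce W).E : ℤ) - Nat.card W
    + Nat.card (Quot (G.toMultigraph.induce W).Reach)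
    + ∑ᶠ v ∈ W, (G.weight v : ℤ)

end WGraph


namespace Multigraph

variable {G : Multigraph}

lemma Adj.symm' {S : Set G.E} {u v : G.V} (h : G.Adj S u v) : G.Adj S v u := by
  obtain ⟨e, he, h⟩ := h
  exact ⟨e, he, h.symm⟩

lemma ReachOn.symm' {S : Set G.E} {u v : G.V} (h : G.ReachOn S u v) : G.ReachOn S v u :=
  haveI : Std.Symm (G.Adj S) := ⟨fun _ _ => Adj.symm'⟩
  (Relation.ReflTransGen.stdSymm (r := G.Adj S)).symm _ _ h

lemma ReachOn.trans' {S : Set G.E} {u v w : G.V} (h : G.ReachOn S u v)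
    (h' : G.ReachOn S v w) : G.ReachOn S u w :=
  Relation.ReflTransGen.trans h h'

lemma reach_mono {S T : Set G.E} (hST : S ⊆ T) {u v : G.V} (h : G.ReachOn S u v) :
    G.ReachOn T u v :=
  Relation.ReflTransGen.mono (r := G.Adj S) (p := G.Adj T)
    (fun _ _ ⟨e, he, ho⟩ => ⟨e, hST he, ho⟩) _ _ h

lemma reach_step {S : Set G.E} {f : G.E} (hf : f ∈ S) {u v : G.V}
    (ho : (G.src f = u ∧ G.tgt f = v) ∨ (G.src f = v ∧ G.tgt f = u)) :
    G.ReachOn S u v :=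
  Relation.ReflTransGen.single ⟨f, hf, ho⟩

lemma reachOn_equivalence (S : Set G.E) : Equivalence (G.ReachOn S) :=
  ⟨fun _ => Relation.ReflTransGen.refl, ReachOn.symm', ReachOn.trans'⟩

lemma quot_mk_eq {S : Set G.E} {u v : G.V} :
    Quot.mk (G.ReachOn S) u = Quot.mk (G.ReachOn S) v ↔ G.ReachOn S u v := by
  rw [Quot.eq, (reachOn_equivalence S).eqvGen_iff]

/-- Truncation: a walk either avoids `f` or reaches an endpoint of `f` avoiding `f`. -/
lemma reach_avoid {S : Set G.E} (f : G.E) {x y : G.V} (h : G.ReachOn S x y) :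
    G.ReachOn (S ∩ {h | h ≠ f}) x y ∨ G.ReachOn (S ∩ {h | h ≠ f}) x (G.src f) ∨
      G.ReachOn (S ∩ {h | h ≠ f}) x (G.tgt f) := by
  induction h with
  | refl => exact Or.inl Relation.ReflTransGen.refl
  | @tail m y p step ih =>
    rcases ih with ih | ih | ih
    · obtain ⟨h, hS, ho⟩ := step
      by_cases hhf : h = f
      · subst hhf
        rcases ho with ⟨h1, _⟩ | ⟨_, h2⟩
        · exact Or.inr (Or.inl (h1 ▸ ih))
        · exact Or.inr (Or.inr (h2 ▸ ih))
      · exact Or.inl (ih.tail ⟨h, ⟨hS, hhf⟩, ho⟩)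
    · exact Or.inr (Or.inl ih)
    · exact Or.inr (Or.inr ih)

/-- Crossing lemma: a walk from outside `A` to inside `A` must pass through an
endpoint of `g`, provided every other edge of `S` preserves membership in `A`. -/
lemma reach_cross {S : Set G.E} {A : Set G.V} {g : G.E}
    (hcl : ∀ h ∈ S, h ≠ g → (G.src h ∈ A ↔ G.tgt h ∈ A))
    {x y : G.V} (hxy : G.ReachOn S x y) (hx : x ∉ A) (hy : y ∈ A) :
    G.ReachOn S x (G.src g) ∨ G.ReachOn S x (G.tgt g) := by
  induction hxy with
  | refl => exact absurd hy hx
  | @tail m y p step ih =>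
    by_cases hm : m ∈ A
    · exact ih hm
    · obtain ⟨h, hS, ho⟩ := step
      by_cases hhg : h = g
      · subst hhg
        rcases ho with ⟨h1, _⟩ | ⟨_, h2⟩
        · exact Or.inl (h1 ▸ p)
        · exact Or.inr (h2 ▸ p)
      · rcases ho with ⟨h1, h2⟩ | ⟨h1, h2⟩
        · exact absurd (h1 ▸ ((hcl h hS hhg).mpr (h2.symm ▸ hy))) hm
        · exact absurd (h2 ▸ ((hcl h hS hhg).mp (h1.symm ▸ hy))) hm

/-- Last-bridge lemma. -/
lemma reach_lastBridge {S : Set G.E} {x y : G.V} (hxy : G.ReachOn S x y) :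
    G.ReachOn (S ∩ {h | ¬ G.IsBridge h}) x y ∨
      ∃ h ∈ S, G.IsBridge h ∧ (G.ReachOn {h' | ¬ G.IsBridge h'} (G.src h) y ∨
        G.ReachOn {h' | ¬ G.IsBridge h'} (G.tgt h) y) := by
  induction hxy with
  | refl => exact Or.inl Relation.ReflTransGen.refl
  | @tail m y p step ih =>
    obtain ⟨h, hS, ho⟩ := step
    by_cases hbr : G.IsBridge h
    · refine Or.inr ⟨h, hS, hbr, ?_⟩
      rcases ho with ⟨_, h2⟩ | ⟨h1, _⟩
      · exact Or.inr (h2 ▸ Relation.ReflTransGen.refl)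
      · exact Or.inl (h1 ▸ Relation.ReflTransGen.refl)
    · rcases ih with ih | ⟨h', hS', hbr', hre⟩
      · exact Or.inl (ih.tail ⟨h, ⟨hS, hbr⟩, ho⟩)
      · refine Or.inr ⟨h', hS', hbr', ?_⟩
        rcases hre with hre | hre
        · exact Or.inl (hre.tail ⟨h, hbr, ho⟩)
        · exact Or.inr (hre.tail ⟨h, hbr, ho⟩)

end Multigraph
namespace Multigraph

variable {H : Multigraph}

/-- Endpoint specification: `{u, v}` are the endpoints of `f` (in some order). -/
def EndSpec (H : Multigraph) (f : H.E) (u v : H.V) : Prop :=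
  (H.src f = u ∧ H.tgt f = v) ∨ (H.src f = v ∧ H.tgt f = u)

lemma EndSpec.symm {f : H.E} {u v : H.V} (h : H.EndSpec f u v) : H.EndSpec f v u :=
  Or.symm h

lemma EndSpec.reach {S : Set H.E} {f : H.E} (hf : f ∈ S) {u v : H.V}
    (h : H.EndSpec f u v) : H.ReachOn S u v := reach_step hf h

lemma EndSpec.not_reach {f : H.E} (hbr : H.IsBridge f) {u v : H.V}
    (h : H.EndSpec f u v) : ¬ H.ReachOn {h | h ≠ f} u v := by
  rcases h with ⟨h1, h2⟩ | ⟨h1, h2⟩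
  · exact fun hr => hbr (h1 ▸ h2 ▸ hr : _)
  · exact fun hr => hbr (h1 ▸ h2 ▸ hr.symm' : _)

/-- For a bridge `f`, every vertex reaches an endpoint of `f` avoiding `f`. -/
lemma reach_some_endpoint (hconn : H.Connected) (f : H.E) (w : H.V) :
    H.ReachOn {h | h ≠ f} w (H.src f) ∨ H.ReachOn {h | h ≠ f} w (H.tgt f) := by
  rcases reach_avoid f (hconn.2 w (H.src f)) with hr | hr | hr
  · exact Or.inl (reach_mono Set.inter_subset_right hr)
  · exact Or.inl (reach_mono Set.inter_subset_right hr)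
  · exact Or.inr (reach_mono Set.inter_subset_right hr)

/-- There cannot be two distinct bridges incident to the 2-edge-connected class
of the base point `a`. -/
lemma not_two_bridges {a b : H.V}
    (hconn : H.Connected)
    (hsep : ∀ f, H.IsBridge f → ¬ H.ReachOn {h | h ≠ f} a b)
    {f g : H.E} (hf : H.IsBridge f) (hg : H.IsBridge g) (hfg : f ≠ g)
    {uf vf ug vg : H.V}
    (hef : H.EndSpec f uf vf) (heg : H.EndSpec g ug vg)
    (hauf : H.ReachOn {h | ¬ H.IsBridge h} a uf)
    (haug : H.ReachOn {h | ¬ H.IsBridge h} a ug) : False := by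
  have nbf : {h : H.E | ¬ H.IsBridge h} ⊆ {h | h ≠ f} := fun h hh => by
    rintro rfl; exact hh hf
  have nbg : {h : H.E | ¬ H.IsBridge h} ⊆ {h | h ≠ g} := fun h hh => by
    rintro rfl; exact hh hg
  have hauf_f : H.ReachOn {h | h ≠ f} a uf := reach_mono nbf hauf
  have hauf_g : H.ReachOn {h | h ≠ g} a uf := reach_mono nbg hauf
  have haug_f : H.ReachOn {h | h ≠ f} a ug := reach_mono nbf haug
  have haug_g : H.ReachOn {h | h ≠ g} a ug := reach_mono nbg haug
  -- `vg` is on `a`'s side of `f`, and `vf` is on `a`'s side of `g`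
  have havg_f : H.ReachOn {h | h ≠ f} a vg :=
    haug_f.trans' (heg.reach (Ne.symm hfg))
  have havf_g : H.ReachOn {h | h ≠ g} a vf :=
    hauf_g.trans' (hef.reach hfg)
  -- `b` reaches `vf` avoiding `f`
  have hbvf : H.ReachOn {h | h ≠ f} b vf := by
    rcases hef with ⟨h1, h2⟩ | ⟨h1, h2⟩ <;>
      rcases reach_some_endpoint hconn f b with hr | hr
    · exact absurd (hauf_f.trans' (h1 ▸ hr : _).symm') (hsep f hf)
    · exact (h2 ▸ hr : _)
    · exact (h1 ▸ hr : _)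
    · exact absurd (hauf_f.trans' (h2 ▸ hr : _).symm') (hsep f hf)
  -- the walk `b → vf` must cross `g`, whose endpoints are on `a`'s side of `f`
  have hcl : ∀ h ∈ {h : H.E | h ≠ f}, h ≠ g →
      (H.src h ∈ {w | H.ReachOn {h' | h' ≠ g} a w} ↔
        H.tgt h ∈ {w | H.ReachOn {h' | h' ≠ g} a w}) := by
    intro h _ hhg
    exact ⟨fun hs => hs.trans' (reach_step hhg (Or.inl ⟨rfl, rfl⟩)),
      fun ht => ht.trans' (reach_step hhg (Or.inr ⟨rfl, rfl⟩))⟩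
  have hend : H.ReachOn {h | h ≠ f} b (H.src g) ∨ H.ReachOn {h | h ≠ f} b (H.tgt g) :=
    reach_cross hcl hbvf (hsep g hg) havf_g
  rcases heg with ⟨g1, g2⟩ | ⟨g1, g2⟩ <;> rcases hend with hr | hr
  · exact hsep f hf (haug_f.trans' ((g1 ▸ hr : _)).symm')
  · exact hsep f hf (havg_f.trans' ((g2 ▸ hr : _)).symm')
  · exact hsep f hf (havg_f.trans' ((g1 ▸ hr : _)).symm')
  · exact hsep f hf (haug_f.trans' ((g2 ▸ hr : _)).symm')

end Multigraph
namespace Multigraph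

variable {H : Multigraph}

/-- The set of edges of `H.Br` incident to the class of `c`. -/
def incidentSet (H : Multigraph) (c : H.V) : Set H.Br.E :=
  {F | H.Br.src F = Quot.mk (H.ReachOn {h | ¬ H.IsBridge h}) c ∨
       H.Br.tgt F = Quot.mk (H.ReachOn {h | ¬ H.IsBridge h}) c}

lemma degAt_mk (c : H.V) :
    H.Br.degAt (Quot.mk (H.ReachOn {h | ¬ H.IsBridge h}) c) = (H.incidentSet c).ncard := rfl

lemma incident_endpoint {c : H.V} {F : H.Br.E} (hF : F ∈ H.incidentSet c) :
    ∃ u v, H.EndSpec F.1 u v ∧ H.ReachOn {h | ¬ H.IsBridge h} c u := by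
  rcases hF with hF | hF
  · exact ⟨H.src F.1, H.tgt F.1, Or.inl ⟨rfl, rfl⟩, (quot_mk_eq.mp hF).symm'⟩
  · exact ⟨H.tgt F.1, H.src F.1, Or.inr ⟨rfl, rfl⟩, (quot_mk_eq.mp hF).symm'⟩

lemma incident_nonempty (hconn : H.Connected) {g0 : H.E} (hg0 : H.IsBridge g0) (c : H.V) :
    (H.incidentSet c).Nonempty := by
  rcases reach_lastBridge (hconn.2 (H.src g0) c) with hr | ⟨h, _, hbr, hre⟩
  · exact ⟨⟨g0, hg0⟩, Or.inl (Quot.sound (reach_mono Set.inter_subset_right hr))⟩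
  · rcases hre with hre | hre
    · exact ⟨⟨h, hbr⟩, Or.inl (Quot.sound hre)⟩
    · exact ⟨⟨h, hbr⟩, Or.inr (Quot.sound hre)⟩

lemma incident_subsingleton {a b : H.V} (hconn : H.Connected)
    (hsep : ∀ f, H.IsBridge f → ¬ H.ReachOn {h | h ≠ f} a b) :
    (H.incidentSet a).Subsingleton := by
  intro F hF F' hF'
  by_contra hFF
  obtain ⟨uf, vf, hef, hru⟩ := incident_endpoint hF
  obtain ⟨ug, vg, heg, hru'⟩ := incident_endpoint hF'
  exact not_two_bridges hconn hsep F.2 F'.2 (fun h => hFF (Subtype.ext h)) hef heg hru hru'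

lemma side (hconn : H.Connected) {a b : H.V}
    (hsep : ∀ f, H.IsBridge f → ¬ H.ReachOn {h | h ≠ f} a b)
    {f : H.E} (hf : H.IsBridge f) (c : H.V) :
    H.ReachOn {h | h ≠ f} a c ∨ H.ReachOn {h | h ≠ f} b c := by
  rcases reach_some_endpoint hconn f a with ha | ha <;>
    rcases reach_some_endpoint hconn f b with hb | hb <;>
      rcases reach_some_endpoint hconn f c with hc | hc
  · exact Or.inl (ha.trans' hc.symm')
  · exact absurd (ha.trans' hb.symm') (hsep f hf)
  · exact Or.inl (ha.trans' hc.symm')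
  · exact Or.inr (hb.trans' hc.symm')
  · exact Or.inr (hb.trans' hc.symm')
  · exact Or.inl (ha.trans' hc.symm')
  · exact absurd (ha.trans' hb.symm') (hsep f hf)
  · exact Or.inl (ha.trans' hc.symm')

lemma reach_class_of_unique {p c : H.V} {F0 : H.Br.E}
    (huniq : ∀ F' ∈ H.incidentSet c, F' = F0)
    (hpc : H.ReachOn {h | h ≠ F0.1} p c) :
    H.ReachOn {h | ¬ H.IsBridge h} p c := by
  rcases reach_lastBridge hpc with hr | ⟨h, hhS, hbr, hre⟩
  · exact reach_mono Set.inter_subset_right hr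
  · exfalso
    have hmem : (⟨h, hbr⟩ : H.Br.E) ∈ H.incidentSet c := by
      rcases hre with hre | hre
      · exact Or.inl (Quot.sound hre)
      · exact Or.inr (Quot.sound hre)
    exact hhS (congrArg Subtype.val (huniq _ hmem))

lemma br_numLeaves {a b : H.V} (hconn : H.Connected)
    (hsep : ∀ f, H.IsBridge f → ¬ H.ReachOn {h | h ≠ f} a b) :
    H.Br.numLeaves = 2 := by
  have hsep' : ∀ f, H.IsBridge f → ¬ H.ReachOn {h | h ≠ f} b a :=
    fun f hf hr => hsep f hf hr.symm'
  by_cases hB : ∃ g, H.IsBridge g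
  · obtain ⟨g0, hg0⟩ := hB
    -- every class has positive degree
    have hpos : ∀ v : H.Br.V, H.Br.degAt v ≠ 0 := by
      intro v hv
      obtain ⟨c, rfl⟩ := Quot.exists_rep v
      rw [degAt_mk] at hv
      have := (Set.ncard_pos (Set.toFinite _)).mpr (incident_nonempty hconn hg0 c)
      omega
    -- the classes of `a` and `b` have degree exactly one
    have hdeg1 : ∀ p q : H.V, (∀ f, H.IsBridge f → ¬ H.ReachOn {h | h ≠ f} p q) →
        (H.incidentSet p).ncard = 1 := by
      intro p q hsepp
      obtain ⟨F0, hF0⟩ := incident_nonempty hconn hg0 p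
      have hss := incident_subsingleton hconn hsepp
      have : H.incidentSet p = {F0} :=
        Set.eq_singleton_iff_unique_mem.mpr ⟨hF0, fun x hx => hss hx hF0⟩
      rw [this, Set.ncard_singleton]
    -- a class of degree one is the class of `a` or of `b`
    have honly : ∀ c : H.V, H.Br.degAt (Quot.mk _ c) = 1 →
        Quot.mk (H.ReachOn {h | ¬ H.IsBridge h}) c = Quot.mk _ a ∨
          Quot.mk (H.ReachOn {h | ¬ H.IsBridge h}) c = Quot.mk _ b := by
      intro c hc
      rw [degAt_mk] at hc
      obtain ⟨F0, hsing⟩ := Set.ncard_eq_one.mp hc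
      have huniq : ∀ F' ∈ H.incidentSet c, F' = F0 := fun F' h => by
        rw [hsing] at h; exact h
      rcases side hconn hsep F0.2 c with hr | hr
      · exact Or.inl (Quot.sound (reach_class_of_unique huniq hr).symm')
      · exact Or.inr (Quot.sound (reach_class_of_unique huniq hr).symm')
    have ab_ne : Quot.mk (H.ReachOn {h | ¬ H.IsBridge h}) a ≠ Quot.mk _ b := by
      intro h
      exact hsep g0 hg0 (reach_mono (fun x hx => by rintro rfl; exact hx hg0)
        (quot_mk_eq.mp h))
    have h0 : {v : H.Br.V | H.Br.degAt v = 0} = ∅ :=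
      Set.eq_empty_iff_forall_notMem.mpr fun v hv => hpos v hv
    have h1 : {v : H.Br.V | H.Br.degAt v = 1} =
        {Quot.mk (H.ReachOn {h | ¬ H.IsBridge h}) a, Quot.mk _ b} := by
      ext v
      constructor
      · intro hv
        obtain ⟨c, rfl⟩ := Quot.exists_rep v
        exact honly c hv
      · rintro (rfl | rfl)
        · exact (degAt_mk a).trans (hdeg1 a b hsep)
        · exact (degAt_mk b).trans (hdeg1 b a hsep')
    show 2 * _ + _ = 2
    rw [h0, h1, Set.ncard_empty]
    exact (congrArg (2 * 0 + ·) (Set.ncard_pair ab_ne)).trans rfl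
  · -- no bridges at all: a single class, no edges
    push_neg at hB
    haveI hE : IsEmpty H.Br.E := ⟨fun F => hB F.1 F.2⟩
    have hdeg : ∀ v : H.Br.V, H.Br.degAt v = 0 := by
      intro v
      show Set.ncard _ = 0
      rw [Set.eq_empty_of_isEmpty ({e : H.Br.E | H.Br.src e = v ∨ H.Br.tgt e = v})]
      exact Set.ncard_empty _
    have hsub : Subsingleton H.Br.V := by
      constructor
      intro x y
      induction x using Quot.ind
      induction y using Quot.ind
      exact Quot.sound (reach_mono (fun h _ => hB h) (hconn.2 _ _))
    have hne : Nonempty H.Br.V := ⟨Quot.mk _ hconn.1.some⟩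
    have h0 : {v : H.Br.V | H.Br.degAt v = 0} = Set.univ :=
      Set.eq_univ_of_forall fun v => hdeg v
    have h1 : {v : H.Br.V | H.Br.degAt v = 1} = ∅ :=
      Set.eq_empty_iff_forall_notMem.mpr fun v hv => by
        have h' : H.Br.degAt v = 1 := hv
        rw [hdeg v] at h'; exact one_ne_zero h'.symm
    show 2 * _ + _ = 2
    rw [h0, h1, Set.ncard_empty, Set.ncard_univ, Nat.card_eq_one_iff_unique.mpr ⟨hsub, hne⟩]

end Multigraph
namespace Multigraph

variable {G : Multigraph}

/-- Replacing uses of `e` by a detour from `src e` to `tgt e`. -/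
lemma reach_replace {S : Set G.E} {e : G.E}
    (hab : G.ReachOn {h | h ∈ S ∧ h ≠ e} (G.src e) (G.tgt e))
    {x y : G.V} (hxy : G.ReachOn S x y) : G.ReachOn {h | h ∈ S ∧ h ≠ e} x y := by
  induction hxy with
  | refl => exact Relation.ReflTransGen.refl
  | @tail m y p step ih =>
    obtain ⟨h, hS, ho⟩ := step
    by_cases hhe : h = e
    · subst hhe
      rcases ho with ⟨h1, h2⟩ | ⟨h1, h2⟩
      · exact ih.trans' (h1 ▸ h2 ▸ hab : _)
      · exact ih.trans' (h1 ▸ h2 ▸ hab.symm' : _)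
    · exact ih.tail ⟨h, ⟨hS, hhe⟩, ho⟩

lemma del_to_orig {e : G.E} {f : (G.deleteEdge e).E} {u v : (G.deleteEdge e).V}
    (h : (G.deleteEdge e).ReachOn {h | h ≠ f} u v) :
    G.ReachOn {h | h ≠ e ∧ h ≠ f.1} u v := by
  refine Relation.ReflTransGen.mono ?_ _ _ h
  rintro u' v' ⟨g, hgS, ho⟩
  exact ⟨g.1, ⟨g.2, fun hh => hgS (Subtype.ext hh)⟩, ho⟩

lemma orig_to_del {e : G.E} {f : (G.deleteEdge e).E} {u v : G.V}
    (h : G.ReachOn {h | h ≠ e ∧ h ≠ f.1} u v) :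
    (G.deleteEdge e).ReachOn {h | h ≠ f} u v := by
  refine Relation.ReflTransGen.mono ?_ _ _ h
  rintro u' v' ⟨g, hgS, ho⟩
  exact ⟨⟨g, hgS.1⟩, fun hh => hgS.2 (congrArg Subtype.val hh), ho⟩

lemma orig_to_del_univ {e : G.E} {u v : G.V}
    (h : G.ReachOn {h | h ≠ e} u v) :
    (G.deleteEdge e).ReachOn Set.univ u v := by
  refine Relation.ReflTransGen.mono ?_ _ _ h
  rintro u' v' ⟨g, hgS, ho⟩
  exact ⟨⟨g, hgS⟩, trivial, ho⟩

lemma deleteEdge_connected (hG : G.TwoEdgeConnected) (e : G.E) :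
    (G.deleteEdge e).Connected := by
  refine ⟨hG.1.1, fun u v => ?_⟩
  have he : G.ReachOn {h | h ≠ e} (G.src e) (G.tgt e) := not_not.mp (hG.2 e)
  have hab : G.ReachOn {h | h ∈ Set.univ ∧ h ≠ e} (G.src e) (G.tgt e) :=
    reach_mono (by intro h hh; exact ⟨trivial, hh⟩) he
  have := reach_replace hab (hG.1.2 u v)
  exact orig_to_del_univ (reach_mono (by intro h hh; exact hh.2) this)

lemma deleteEdge_sep (hG : G.TwoEdgeConnected) (e : G.E) :
    ∀ f, (G.deleteEdge e).IsBridge f →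
      ¬ (G.deleteEdge e).ReachOn {h | h ≠ f} (G.src e) (G.tgt e) := by
  intro f hf hr
  have hr' : G.ReachOn {h | h ≠ e ∧ h ≠ f.1} (G.src e) (G.tgt e) := del_to_orig hr
  have hf1 : G.ReachOn {h | h ≠ f.1} (G.src f.1) (G.tgt f.1) := not_not.mp (hG.2 f.1)
  have hab : G.ReachOn {h | h ∈ {h | h ≠ f.1} ∧ h ≠ e} (G.src e) (G.tgt e) :=
    reach_mono (by intro h hh; exact ⟨hh.2, hh.1⟩) hr'
  have h2 := reach_replace hab hf1
  have h3 : G.ReachOn {h | h ≠ e ∧ h ≠ f.1} (G.src f.1) (G.tgt f.1) :=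
    reach_mono (by intro h hh; exact ⟨hh.2, hh.1⟩) h2
  exact hf (orig_to_del h3)

end Multigraph

/-- Let `G` be a 2-edge-connected multigraph and `e` any edge.
Then `#l((G - e)^Br) = #l(G^Br) = 2`. -/
theorem leaves_of_deleteEdge (G : Multigraph) (hG : G.TwoEdgeConnected) (e : G.E) :
    (G.deleteEdge e).Br.numLeaves = 2 ∧ G.Br.numLeaves = 2 := by
  constructor
  · exact Multigraph.br_numLeaves (a := G.src e) (b := G.tgt e)
      (Multigraph.deleteEdge_connected hG e) (Multigraph.deleteEdge_sep hG e)
  · exact Multigraph.br_numLeaves (a := hG.1.1.some) (b := hG.1.1.some)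
      hG.1 (fun f hf => absurd hf (hG.2 f))
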